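/- Under the same setup (Θ an ε-embedding for K + span(w), ε<1), the sketched projector satisfies (1/(1+ε))(‖Π_K w‖² − 2ε‖w‖²) ≤ ‖Π_K^Θ w‖² ≤ (1/(1−ε))(‖Π_K w‖² + 2ε‖w‖²). -/

import Mathlib

set_option maxHeartbeats 1000000


open scoped ComplexInnerProductSpace

noncomputable section

/-- Norm bounds for the sketched orthogonal projection in terms of the ℓ₂ projection. -/
theorem sketched_projection_norm_bounds {n k : ℕ}
    (K : Submodule ℂ (EuclideanSpace ℂ (Fin n)))
    (Θ : EuclideanSpace ℂ (Fin n) →ₗ[ℂ] EuclideanSpace ℂ (Fin k))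
    (w Pw : EuclideanSpace ℂ (Fin n)) (ε : ℝ) (hε : ε < 1)
    (hemb : ∀ x ∈ K ⊔ (ℂ ∙ w), ∀ y ∈ K ⊔ (ℂ ∙ w),
      ‖⟪x, y⟫ - ⟪Θ x, Θ y⟫‖ ≤ ε * ‖x‖ * ‖y‖)
    (hPwK : Pw ∈ K) (hPw : ∀ v ∈ K, ‖Θ (w - Pw)‖ ≤ ‖Θ (w - v)‖) :
    (1 / (1 + ε)) *
        (‖(K.orthogonalProjection w : EuclideanSpace ℂ (Fin n))‖ ^ 2 - 2 * ε * ‖w‖ ^ 2)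
      ≤ ‖Pw‖ ^ 2 ∧
      ‖Pw‖ ^ 2 ≤ (1 / (1 - ε)) *
        (‖(K.orthogonalProjection w : EuclideanSpace ℂ (Fin n))‖ ^ 2 + 2 * ε * ‖w‖ ^ 2) := by
  have hKV : K ≤ K ⊔ (ℂ ∙ w) := le_sup_left
  have hwV : w ∈ K ⊔ (ℂ ∙ w) :=
    le_sup_right (α := Submodule ℂ (EuclideanSpace ℂ (Fin n)))
      (Submodule.mem_span_singleton_self w)
  -- the ε-embedding property gives two-sided norm bounds
  have emb : ∀ x ∈ K ⊔ (ℂ ∙ w), |‖x‖ ^ 2 - ‖Θ x‖ ^ 2| ≤ ε * ‖x‖ ^ 2 := by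
    intro x hx
    have h := hemb x hx x hx
    rw [inner_self_eq_norm_sq_to_K, inner_self_eq_norm_sq_to_K] at h
    norm_cast at h
    calc |‖x‖ ^ 2 - ‖Θ x‖ ^ 2| ≤ ε * ‖x‖ * ‖x‖ := h
      _ = ε * ‖x‖ ^ 2 := by ring
  rcases lt_or_ge ε 0 with hε0 | hε0
  · -- degenerate case: ε < 0 forces everything to vanish
    have hz : ∀ x ∈ K ⊔ (ℂ ∙ w), x = 0 := by
      intro x hx
      have h := emb x hx
      have h0 : (0 : ℝ) ≤ |‖x‖ ^ 2 - ‖Θ x‖ ^ 2| := abs_nonneg _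
      have hx2 : ‖x‖ ^ 2 ≤ 0 := by nlinarith [sq_nonneg ‖x‖]
      have : ‖x‖ = 0 := by nlinarith [sq_nonneg ‖x‖, norm_nonneg x]
      simpa using this
    have hw0 : w = 0 := hz w hwV
    have hPw0 : Pw = 0 := hz Pw (hKV hPwK)
    subst hw0 hPw0
    simp
  · -- main case: 0 ≤ ε < 1
    set P : EuclideanSpace ℂ (Fin n) := (K.orthogonalProjection w : EuclideanSpace ℂ (Fin n))
      with hP
    have hPK : P ∈ K := SetLike.coe_mem _
    -- ℓ₂ Pythagoras
    have hwPorth : ∀ v ∈ K, ⟪w - P, v⟫ = 0 := fun v hv =>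
      K.starProjection_inner_eq_zero w v hv
    have pyth1 : ‖w‖ ^ 2 = ‖P‖ ^ 2 + ‖w - P‖ ^ 2 := by
      have h := norm_add_sq (𝕜 := ℂ) P (w - P)
      rw [inner_eq_zero_symm.mpr (hwPorth P hPK)] at h
      simpa using h
    -- minimality of the ℓ₂ projection (squared)
    have hmin2 : ‖w - P‖ ^ 2 ≤ ‖w - Pw‖ ^ 2 := by
      have h := norm_add_sq (𝕜 := ℂ) (w - P) (P - Pw)
      rw [hwPorth (P - Pw) (Submodule.sub_mem K hPK hPwK)] at h
      have heq : (w - P) + (P - Pw) = w - Pw := by abel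
      rw [heq] at h
      simp only [map_zero] at h
      nlinarith [sq_nonneg ‖P - Pw‖]
    -- Θ-orthogonality of the sketched residual
    have hiInf : ‖Θ w - Θ Pw‖ = ⨅ z : (K.map Θ), ‖Θ w - z‖ := by
      apply le_antisymm
      · apply le_ciInf
        intro z
        obtain ⟨v, hv, hvz⟩ := Submodule.mem_map.mp z.2
        rw [← hvz]
        simpa [map_sub] using hPw v hv
      · have bdd : BddBelow (Set.range fun z : (K.map Θ) => ‖Θ w - z‖) := by
          refine ⟨0, ?_⟩
          rintro r ⟨z, rfl⟩
          exact norm_nonneg _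
        exact ciInf_le bdd ⟨Θ Pw, Submodule.mem_map_of_mem hPwK⟩
    have horth2 : ∀ v ∈ K, ⟪Θ w - Θ Pw, Θ v⟫ = 0 := by
      intro v hv
      exact (Submodule.norm_eq_iInf_iff_inner_eq_zero (K.map Θ)
        (Submodule.mem_map_of_mem hPwK)).mp hiInf (Θ v) (Submodule.mem_map_of_mem hv)
    -- Θ Pythagoras
    have pythT : ‖Θ w‖ ^ 2 = ‖Θ Pw‖ ^ 2 + ‖Θ (w - Pw)‖ ^ 2 := by
      have h := norm_add_sq (𝕜 := ℂ) (Θ Pw) (Θ (w - Pw))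
      have hz : ⟪Θ Pw, Θ (w - Pw)⟫ = 0 := by
        rw [inner_eq_zero_symm]
        rw [map_sub]; exact horth2 Pw hPwK
      rw [hz] at h
      have heq : Θ Pw + Θ (w - Pw) = Θ w := by rw [map_sub]; abel
      rw [heq] at h
      simpa using h
    have hminT : ‖Θ (w - Pw)‖ ^ 2 ≤ ‖Θ (w - P)‖ ^ 2 :=
      pow_le_pow_left₀ (norm_nonneg _) (hPw P hPK) 2
    -- embedding bounds for the relevant vectors
    have ePw := emb Pw (hKV hPwK)
    have eW := emb w hwV
    have eWPw := emb (w - Pw) (Submodule.sub_mem _ hwV (hKV hPwK))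
    have eWP := emb (w - P) (Submodule.sub_mem _ hwV (hKV hPK))
    rw [abs_le] at ePw eW eWPw eWP
    have h1 : (0 : ℝ) < 1 + ε := by linarith
    have h2 : (0 : ℝ) < 1 - ε := by linarith
    have hwPsub : Θ w - Θ Pw = Θ (w - Pw) := (map_sub Θ w Pw).symm
    constructor
    · rw [one_div, inv_mul_le_iff₀ h1]
      nlinarith [sq_nonneg ‖P‖, sq_nonneg ‖w - P‖, sq_nonneg ‖Pw‖,
        mul_nonneg hε0 (sq_nonneg ‖P‖), mul_nonneg hε0 (sq_nonneg ‖w - P‖)]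
    · rw [one_div, ← div_eq_inv_mul, le_div_iff₀ h2]
      nlinarith [sq_nonneg ‖P‖, sq_nonneg ‖w - P‖, sq_nonneg ‖w - Pw‖,
        mul_nonneg hε0 (sq_nonneg ‖P‖), mul_nonneg hε0 (sq_nonneg ‖w - P‖),
        mul_nonneg hε0 (sq_nonneg ‖w - Pw‖)]
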